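/- Let k ≥ 2, q_k = (2^k-1)/k, and for nonnegative measurable functions (f_α : α ∈ Ṽ_k) on ℝ^d define the cubic convolution product D_k(f_α : α ∈ Ṽ_k)(x) = ∫_{ℝ^{kd}} ∏_{α∈Ṽ_k} f_α(x + α·h) dh. Then there is a constant C = C(k,d) such that for every x, D_k(f_α : α ∈ Ṽ_k)(x) ≤ C · ∏_{α∈Ṽ_k} ‖f_α‖_{q_k}. -/

import Mathlib

open MeasureTheory Filter
open scoped ENNReal

noncomputable section

/-- The zero vertex of the discrete cube `{0,1}^k`. -/
def vzero (k : ℕ) : Fin k → Bool := fun _ => false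

/-- `α · h = α₁ h₁ + ⋯ + α_k h_k` for a vertex `α ∈ {0,1}^k` and `h ∈ (ℝ^d)^k`. -/
def dotB {k d : ℕ} (α : Fin k → Bool) (h : Fin k → Fin d → ℝ) : Fin d → ℝ :=
  ∑ i, if α i then h i else 0

/-- Generalized cubic convolution product `D_k(f_α : α ∈ Ṽ_k)(x)`. -/
def cubeD (k d : ℕ) (f : (Fin k → Bool) → (Fin d → ℝ) → ℝ) (x : Fin d → ℝ) : ℝ :=
  ∫ h : Fin k → Fin d → ℝ,
    ∏ α ∈ Finset.univ.filter (fun α : Fin k → Bool => α ≠ vzero k), f α (x + dotB α h)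

/-- The Gowers–Host–Kra dual function `D_k f`. -/
def dualFn (k d : ℕ) (f : (Fin d → ℝ) → ℝ) : (Fin d → ℝ) → ℝ :=
  cubeD k d fun _ => f

/-- The Gowers inner product `T_k(f_α : α ∈ V_k)`. -/
def gowersT (k d : ℕ) (f : (Fin k → Bool) → (Fin d → ℝ) → ℝ) : ℝ :=
  ∫ x : Fin d → ℝ, ∫ h : Fin k → Fin d → ℝ, ∏ α : Fin k → Bool, f α (x + dotB α h)

/-- The Gowers–Host–Kra uniformity norm `‖f‖_{U(k)}`. -/
def gowersNorm (k d : ℕ) (f : (Fin d → ℝ) → ℝ) : ℝ :=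
  (gowersT k d fun _ => f) ^ ((1 : ℝ) / 2 ^ k)

/-- The `L^p` norm (as a real number) of a function on `ℝ^d`. -/
def lpN (d : ℕ) (p : ℝ≥0∞) (f : (Fin d → ℝ) → ℝ) : ℝ :=
  (eLpNorm f p volume).toReal

/-- `p_k = 2^k/(k+1)`. -/
def pkR (k : ℕ) : ℝ := 2 ^ k / (k + 1)

/-- `q_k = (2^k-1)/k`. -/
def qkR (k : ℕ) : ℝ := ((2 : ℝ) ^ k - 1) / k

/-- `s_k = 2^k/(2^k-k-1)`, the Hölder conjugate of `p_k`. -/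
def skR (k : ℕ) : ℝ := 2 ^ k / (2 ^ k - k - 1)

/-- The duality pairing `⟨g, f⟩ = ∫ g f`. -/
def pair (d : ℕ) (g f : (Fin d → ℝ) → ℝ) : ℝ := ∫ x, g x * f x

/-- The set of values `|⟨g,f⟩|` over `f ∈ L^{p_k}` with `‖f‖_{U(k)} ≤ 1`. -/
def dualSet (k d : ℕ) (g : (Fin d → ℝ) → ℝ) : Set ℝ :=
  { r | ∃ f : (Fin d → ℝ) → ℝ, MemLp f (ENNReal.ofReal (pkR k)) volume ∧
      gowersNorm k d f ≤ 1 ∧ r = |pair d g f| }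

/-- The anti-uniform norm `‖g‖_{U(k)}^*`. -/
def dualNorm (k d : ℕ) (g : (Fin d → ℝ) → ℝ) : ℝ :=
  sSup (dualSet k d g)

open Finset

-- auxiliary small lemmas
namespace GHKaux

lemma two_pow_big {k : ℕ} : (k:ℝ) + 1 ≤ 2 ^ k := by
  have h : k + 1 ≤ 2^k := Nat.lt_two_pow_self
  exact_mod_cast h

lemma qk_one_le {k : ℕ} (hk : 1 ≤ k) : 1 ≤ qkR k := by
  have hk' : (1:ℝ) ≤ (k:ℝ) := by exact_mod_cast hk
  have h := two_pow_big (k := k)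
  rw [qkR, le_div_iff₀ (by linarith)]
  linarith

lemma qk_pos {k : ℕ} (hk : 1 ≤ k) : 0 < qkR k := lt_of_lt_of_le one_pos (qk_one_le hk)

lemma qk_lt_succ {k : ℕ} (hk : 1 ≤ k) : qkR k < qkR (k+1) := by
  have hk' : (1:ℝ) ≤ (k:ℝ) := by exact_mod_cast hk
  have h := two_pow_big (k := k)
  rw [qkR, qkR, div_lt_div_iff₀ (by linarith) (by push_cast; linarith)]
  push_cast
  rw [pow_succ]
  nlinarith

lemma qk_succ_lt_two_pow {k : ℕ} (hk : 1 ≤ k) : qkR (k+1) < 2 ^ k := by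
  have hk' : (1:ℝ) ≤ (k:ℝ) := by exact_mod_cast hk
  have h := two_pow_big (k := k)
  rw [qkR, div_lt_iff₀ (by push_cast; linarith)]
  push_cast
  rw [pow_succ]
  nlinarith

end GHKaux

namespace GHKaux
open Finset

lemma qk_lt_two {k : ℕ} (hk : 1 ≤ k) : qkR (k+1) < 2 * qkR k := by
  have hk' : (1:ℝ) ≤ (k:ℝ) := by exact_mod_cast hk
  have h := two_pow_big (k := k)
  rw [qkR, qkR, ← mul_div_assoc, div_lt_div_iff₀ (by push_cast; linarith) (by linarith)]
  push_cast
  rw [pow_succ]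
  nlinarith

lemma qk_identity {k : ℕ} (hk : 1 ≤ k) :
    ((2:ℝ)^k - 1) * (2 * qkR k - qkR (k+1)) = qkR k * (qkR (k+1) - 1) := by
  have hk' : (1:ℝ) ≤ (k:ℝ) := by exact_mod_cast hk
  have hκ : (k:ℝ) ≠ 0 := by linarith
  have hκ1 : ((k:ℝ)+1) ≠ 0 := by linarith
  rw [qkR, qkR]
  push_cast
  field_simp
  ring_nf

lemma k_pos_of_ne {k : ℕ} (β : Fin k → Bool) (h : β ≠ vzero k) : 1 ≤ k := by
  rcases Nat.eq_zero_or_pos k with h0 | h1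
  · subst h0
    exact absurd (funext fun i => i.elim0) h
  · exact h1

end GHKaux

namespace GHKaux
open Finset

lemma prod_univ_ite_one {M : Type*} [CommMonoid M] {ι : Type*} [Fintype ι] [DecidableEq ι]
    (z : ι) (f : ι → M) :
    (∏ i : ι, if i = z then 1 else f i) = ∏ i ∈ univ.erase z, f i := by
  rw [← Finset.mul_prod_erase univ _ (mem_univ z), if_pos rfl, one_mul]
  exact Finset.prod_congr rfl fun i hi => if_neg (Finset.ne_of_mem_erase hi)

lemma cons_false_eq_vzero {k : ℕ} (β : Fin k → Bool) :
    Fin.cons false β = vzero (k+1) ↔ β = vzero k := by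
  constructor
  · intro h
    funext i
    have := congrFun h i.succ
    simpa [vzero] using this
  · intro h
    subst h
    funext i
    refine Fin.cases ?_ ?_ i <;> simp [vzero]

lemma cons_true_ne_vzero {k : ℕ} (β : Fin k → Bool) : Fin.cons true β ≠ vzero (k+1) := by
  intro h
  have := congrFun h 0
  simp [vzero] at this

lemma prod_cube_succ {M : Type*} [CommMonoid M] {k : ℕ} (g : (Fin (k+1) → Bool) → M) :
    ∏ α : Fin (k+1) → Bool, g α =
      (∏ β : Fin k → Bool, g (Fin.cons false β)) * ∏ β : Fin k → Bool, g (Fin.cons true β) := by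
  have he := Fintype.prod_equiv (Fin.consEquiv (fun _ : Fin (k+1) => Bool))
    (fun p => g (Fin.cons p.1 p.2)) g (fun p => rfl)
  rw [← he, Fintype.prod_prod_type (f := fun p : Bool × (Fin k → Bool) => g (Fin.cons p.1 p.2)),
    Fintype.prod_bool]
  exact mul_comm _ _

lemma prod_cube_succ_erase {M : Type*} [CommMonoid M] {k : ℕ} (g : (Fin (k+1) → Bool) → M) :
    ∏ α ∈ univ.erase (vzero (k+1)), g α =
      g (Fin.cons true (vzero k)) *
      ∏ β ∈ univ.erase (vzero k), (g (Fin.cons false β) * g (Fin.cons true β)) := by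
  classical
  have h1 : ∏ α ∈ univ.erase (vzero (k+1)), g α
      = ∏ α : Fin (k+1) → Bool, if α = vzero (k+1) then 1 else g α := by
    rw [prod_univ_ite_one]
  rw [h1, prod_cube_succ (fun α => if α = vzero (k+1) then 1 else g α)]
  have h2 : (∏ β : Fin k → Bool, if Fin.cons false β = vzero (k+1) then 1 else g (Fin.cons false β))
      = ∏ β ∈ univ.erase (vzero k), g (Fin.cons false β) := by
    rw [← prod_univ_ite_one (vzero k) (fun β => g (Fin.cons false β))]
    exact Fintype.prod_congr _ _ fun β => if_congr (cons_false_eq_vzero β) rfl rfl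
  have h3 : (∏ β : Fin k → Bool, if Fin.cons true β = vzero (k+1) then 1 else g (Fin.cons true β))
      = g (Fin.cons true (vzero k)) * ∏ β ∈ univ.erase (vzero k), g (Fin.cons true β) := by
    have : (∏ β : Fin k → Bool, if Fin.cons true β = vzero (k+1) then 1 else g (Fin.cons true β))
        = ∏ β : Fin k → Bool, g (Fin.cons true β) :=
      Fintype.prod_congr _ _ fun β => if_neg (cons_true_ne_vzero β)
    rw [this, ← Finset.mul_prod_erase univ _ (mem_univ (vzero k))]
  rw [h2, h3, Finset.prod_mul_distrib]
  rw [mul_left_comm]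

lemma dotB_cons {k d : ℕ} (b : Bool) (β : Fin k → Bool) (t : Fin d → ℝ) (h : Fin k → Fin d → ℝ) :
    dotB (Fin.cons b β) (Fin.cons t h) = (if b then t else 0) + dotB β h := by
  unfold dotB
  rw [Fin.sum_univ_succ]
  simp only [Fin.cons_zero, Fin.cons_succ]

lemma dotB_vzero {k d : ℕ} (h : Fin k → Fin d → ℝ) : dotB (vzero k) h = 0 := by
  unfold dotB vzero
  simp

lemma measurable_dotB {k d : ℕ} (α : Fin k → Bool) :
    Measurable fun h : Fin k → Fin d → ℝ => dotB α h := by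
  unfold dotB
  apply Finset.measurable_sum
  intro i _
  cases hb : α i
  · simpa using measurable_const
  · simpa using measurable_pi_apply i

lemma lintegral_pi_succ {d k : ℕ} (Φ : (Fin (k+1) → Fin d → ℝ) → ℝ≥0∞) (hΦ : Measurable Φ) :
    ∫⁻ h : Fin (k+1) → Fin d → ℝ, Φ h =
      ∫⁻ t : Fin d → ℝ, ∫⁻ h' : Fin k → Fin d → ℝ, Φ (Fin.cons t h') := by
  have mp := (measurePreserving_piFinSuccAbove
    (fun _ : Fin (k+1) => (volume : Measure (Fin d → ℝ))) 0).symm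
  have h1 := mp.lintegral_comp hΦ
  rw [volume_pi, ← h1]
  have hm : AEMeasurable (fun z : (Fin d → ℝ) × (Fin k → Fin d → ℝ) =>
      Φ ((MeasurableEquiv.piFinSuccAbove (fun _ => Fin d → ℝ) 0).symm z))
      (volume.prod (Measure.pi fun _ => volume)) :=
    (hΦ.comp (MeasurableEquiv.measurable _)).aemeasurable
  rw [MeasureTheory.lintegral_prod _ hm]
  rw [← volume_pi]
  congr 1
  funext t
  congr 1
  funext h'
  congr 1
  simp only [MeasurableEquiv.piFinSuccAbove_symm_apply, Fin.insertNthEquiv,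
    Equiv.coe_fn_mk, Fin.insertNth_zero']

end GHKaux


lemma young {d : ℕ} {U V : (Fin d → ℝ) → ℝ≥0∞} (hU : Measurable U) (hV : Measurable V)
    {a s : ℝ} (ha : 1 < a) (has : a < s) (hrel : 2/a = 1 + 1/s) :
    ∫⁻ t, (∫⁻ y, U y * V (y + t)) ^ s ≤
      (∫⁻ y, U y ^ a) ^ (s/a) * (∫⁻ y, V y ^ a) ^ (s/a) := by
  have ha0 : (0:ℝ) < a := lt_trans one_pos ha
  have hs0 : (0:ℝ) < s := lt_trans ha0 has
  have hsa0 : (0:ℝ) < s / a := div_pos hs0 ha0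
  set IU := ∫⁻ y, U y ^ a with hIU
  set IV := ∫⁻ y, V y ^ a with hIV
  -- degenerate cases
  by_cases hU0 : IU = 0
  · have hUz : U =ᵐ[volume] 0 := by
      have h := (lintegral_eq_zero_iff (hU.pow_const a)).mp hU0
      filter_upwards [h] with y hy
      simpa [ENNReal.rpow_eq_zero_iff, ha0, ha0.not_gt] using hy
    have : ∀ t, (∫⁻ y, U y * V (y + t)) = 0 := by
      intro t
      have hm : Measurable fun y => U y * V (y + t) :=
        hU.mul (hV.comp (measurable_add_const t))
      rw [lintegral_eq_zero_iff hm]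
      filter_upwards [hUz] with y hy
      simp [hy]
    simp only [this, ENNReal.zero_rpow_of_pos hs0, lintegral_zero]
    exact zero_le
  by_cases hV0 : IV = 0
  · have hVz : V =ᵐ[volume] 0 := by
      have h := (lintegral_eq_zero_iff (hV.pow_const a)).mp hV0
      filter_upwards [h] with y hy
      simpa [ENNReal.rpow_eq_zero_iff, ha0, ha0.not_gt] using hy
    have hVint : (∫⁻ y, V y) = 0 := by
      rw [lintegral_eq_zero_iff hV]; exact hVz
    have : ∀ t, (∫⁻ y, U y * V (y + t)) = 0 := by
      intro t
      refine le_antisymm ?_ zero_le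
      have hm : Measurable fun y => V (y + t) := hV.comp (measurable_add_const t)
      calc ∫⁻ y, U y * V (y + t) ≤ ∫⁻ y, ⊤ * V (y + t) :=
            lintegral_mono fun y => mul_le_mul_left le_top _
        _ = ⊤ * ∫⁻ y, V (y + t) := lintegral_const_mul ⊤ hm
        _ = ⊤ * ∫⁻ y, V y := by rw [lintegral_add_right_eq_self V t]
        _ = 0 := by rw [hVint, mul_zero]
    simp only [this, ENNReal.zero_rpow_of_pos hs0, lintegral_zero]
    exact zero_le
  by_cases hUt : IU = ⊤
  · refine le_top.trans_eq ?_
    rw [hUt, ENNReal.top_rpow_of_pos hsa0, ENNReal.top_mul]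
    simp [ENNReal.rpow_eq_zero_iff, hV0, hsa0, hsa0.not_gt, hsa0.le]
  by_cases hVt : IV = ⊤
  · refine le_top.trans_eq ?_
    rw [hVt, ENNReal.top_rpow_of_pos hsa0, ENNReal.mul_top]
    simp [ENNReal.rpow_eq_zero_iff, hU0, hsa0, hsa0.not_gt, hsa0.le]
  -- main case
  have hp1pos : 0 < 1/a - 1/s := by
    rw [sub_pos]
    exact one_div_lt_one_div_of_lt ha0 has
  have hrel' : 2 * s = a * s + a := by
    have h := hrel; field_simp at h; linarith
  have hsum : a * (1/s) + a * (1/a - 1/s) = 1 := by field_simp; ring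
  have hA : Measurable fun t => ∫⁻ y, U y ^ a * V (y + t) ^ a := by
    apply Measurable.lintegral_prod_right' (f := fun z : (Fin d → ℝ) × (Fin d → ℝ) =>
      U z.2 ^ a * V (z.2 + z.1) ^ a)
    exact ((hU.comp measurable_snd).pow_const a).mul
      ((hV.comp (measurable_snd.add measurable_fst)).pow_const a)
  set A := fun t => ∫⁻ y, U y ^ a * V (y + t) ^ a with hAdef
  have key : ∀ t, (∫⁻ y, U y * V (y + t)) ≤
      A t ^ (1/s) * (IU ^ (1/a - 1/s) * IV ^ (1/a - 1/s)) := by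
    intro t
    have hVt' : Measurable fun y => V (y + t) := hV.comp (measurable_add_const t)
    have hconv : (∫⁻ y, U y * V (y + t)) =
        ∫⁻ y, ∏ i : Fin 3, ![fun y => U y ^ a * V (y + t) ^ a,
          fun y => U y ^ a, fun y => V (y + t) ^ a] i y ^ ![1/s, 1/a - 1/s, 1/a - 1/s] i := by
      refine lintegral_congr fun y => ?_
      rw [Fin.prod_univ_three]
      simp only [Matrix.cons_val_zero, Matrix.cons_val_one, Matrix.head_cons,
        Matrix.cons_val_two, Matrix.tail_cons]
      rw [ENNReal.mul_rpow_of_nonneg _ _ (by positivity : (0:ℝ) ≤ 1/s),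
        ← ENNReal.rpow_mul, ← ENNReal.rpow_mul, ← ENNReal.rpow_mul, ← ENNReal.rpow_mul]
      calc U y * V (y + t)
          = (U y ^ (a * (1/s)) * U y ^ (a * (1/a - 1/s))) *
            (V (y + t) ^ (a * (1/s)) * V (y + t) ^ (a * (1/a - 1/s))) := by
            rw [← ENNReal.rpow_add_of_nonneg _ _ (by positivity) (by positivity),
              ← ENNReal.rpow_add_of_nonneg _ _ (by positivity) (by positivity), hsum,
              ENNReal.rpow_one, ENNReal.rpow_one]
        _ = U y ^ (a * (1/s)) * V (y + t) ^ (a * (1/s)) * U y ^ (a * (1/a - 1/s)) *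
            V (y + t) ^ (a * (1/a - 1/s)) := by ring
    rw [hconv]
    have hH := ENNReal.lintegral_prod_norm_pow_le (μ := volume) Finset.univ
      (f := ![fun y => U y ^ a * V (y + t) ^ a, fun y => U y ^ a, fun y => V (y + t) ^ a])
      (p := ![1/s, 1/a - 1/s, 1/a - 1/s]) ?_ ?_ ?_
    · refine hH.trans_eq ?_
      rw [Fin.prod_univ_three]
      simp only [Matrix.cons_val_zero, Matrix.cons_val_one, Matrix.head_cons,
        Matrix.cons_val_two, Matrix.tail_cons]
      rw [show (∫⁻ y, V (y + t) ^ a) = IV from lintegral_add_right_eq_self (fun y => V y ^ a) t,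
        mul_assoc]
    · intro i _
      fin_cases i
      · exact ((hU.pow_const a).mul (hVt'.pow_const a)).aemeasurable
      · exact (hU.pow_const a).aemeasurable
      · exact (hVt'.pow_const a).aemeasurable
    · rw [Fin.sum_univ_three]
      simp only [Matrix.cons_val_zero, Matrix.cons_val_one, Matrix.head_cons,
        Matrix.cons_val_two, Matrix.tail_cons]
      field_simp
      linarith [hrel']
    · intro i _
      fin_cases i
      · show (0:ℝ) ≤ 1/s; positivity
      · show (0:ℝ) ≤ 1/a - 1/s; exact hp1pos.le
      · show (0:ℝ) ≤ 1/a - 1/s; exact hp1pos.le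
  have hAint : (∫⁻ t, A t) = IU * IV := by
    rw [hAdef]
    rw [lintegral_lintegral_swap (((hU.comp measurable_snd).pow_const a).mul
      ((hV.comp (measurable_snd.add measurable_fst)).pow_const a)).aemeasurable]
    calc ∫⁻ y, ∫⁻ t, U y ^ a * V (y + t) ^ a
        = ∫⁻ y, U y ^ a * ∫⁻ t, V (y + t) ^ a := by
          refine lintegral_congr fun y => ?_
          exact lintegral_const_mul _ ((hV.comp (measurable_const.add measurable_id)).pow_const a)
      _ = ∫⁻ y, U y ^ a * IV := by
          refine lintegral_congr fun y => ?_
          rw [show (∫⁻ t, V (y + t) ^ a) = IV from lintegral_add_left_eq_self (fun z => V z ^ a) y]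
      _ = IU * IV := lintegral_mul_const _ (hU.pow_const a)
  have hexp : ∀ (X : ℝ≥0∞), X ≠ 0 → X ≠ ⊤ → X * X ^ ((1/a - 1/s) * s) = X ^ (s/a) := by
    intro X h0 ht
    nth_rewrite 1 [← ENNReal.rpow_one X]
    rw [← ENNReal.rpow_add _ _ h0 ht]
    congr 1
    field_simp
    ring
  calc ∫⁻ t, (∫⁻ y, U y * V (y + t)) ^ s
      ≤ ∫⁻ t, (A t ^ (1/s) * (IU ^ (1/a - 1/s) * IV ^ (1/a - 1/s))) ^ s :=
        lintegral_mono fun t => ENNReal.rpow_le_rpow (key t) hs0.le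
    _ = ∫⁻ t, A t * (IU ^ (1/a - 1/s) * IV ^ (1/a - 1/s)) ^ s := by
        refine lintegral_congr fun t => ?_
        rw [ENNReal.mul_rpow_of_nonneg _ _ hs0.le, ← ENNReal.rpow_mul,
          one_div_mul_cancel hs0.ne', ENNReal.rpow_one]
    _ = (∫⁻ t, A t) * (IU ^ (1/a - 1/s) * IV ^ (1/a - 1/s)) ^ s := lintegral_mul_const _ hA
    _ = IU * IV * (IU ^ (1/a - 1/s) * IV ^ (1/a - 1/s)) ^ s := by rw [hAint]
    _ = IU ^ (s/a) * IV ^ (s/a) := by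
        rw [ENNReal.mul_rpow_of_nonneg _ _ hs0.le, ← ENNReal.rpow_mul, ← ENNReal.rpow_mul,
          mul_mul_mul_comm, hexp IU hU0 hUt, hexp IV hV0 hVt]

namespace GHKaux
open Finset

lemma core {d : ℕ} : ∀ (k : ℕ) (F : (Fin k → Bool) → (Fin d → ℝ) → ℝ≥0∞),
    (∀ α, Measurable (F α)) → ∀ x : Fin d → ℝ,
    (∫⁻ h : Fin k → Fin d → ℝ, ∏ α ∈ Finset.univ.erase (vzero k), F α (x + dotB α h)) ≤
      ∏ α ∈ Finset.univ.erase (vzero k), (∫⁻ y, F α y ^ qkR k) ^ (1 / qkR k) := by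
  intro k
  induction k with
  | zero =>
    intro F hF x
    have he : (Finset.univ.erase (vzero 0) : Finset (Fin 0 → Bool)) = ∅ := by
      ext β
      simp [Finset.mem_erase, Subsingleton.elim β (vzero 0)]
    rw [he]
    simp only [Finset.prod_empty]
    rw [lintegral_one, volume_pi, Measure.pi_univ]
    simp
  | succ k IH =>
    intro F hF x
    set q := qkR k with hq_def
    set Q := qkR (k+1) with hQ_def
    set r := q * Q / (2 * q - Q) with hr_def
    have hQ1 : 1 ≤ Q := qk_one_le (by omega)
    have hQ0 : 0 < Q := lt_of_lt_of_le one_pos hQ1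
    have hFm : ∀ (α : Fin (k+1) → Bool), Measurable fun h : Fin (k+1) → Fin d → ℝ =>
        F α (x + dotB α h) := fun α => (hF α).comp (measurable_const.add (measurable_dotB α))
    have hΦ : Measurable fun h : Fin (k+1) → Fin d → ℝ =>
        ∏ α ∈ Finset.univ.erase (vzero (k+1)), F α (x + dotB α h) :=
      Finset.measurable_prod _ fun α _ => hFm α
    rw [lintegral_pi_succ _ hΦ]
    have htrue : ∀ t : Fin d → ℝ, (if (true : Bool) then t else 0) = t := fun t => rfl
    have hfalse : ∀ t : Fin d → ℝ, (if (false : Bool) then t else 0) = 0 := fun t => rfl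
    have hsplit : ∀ (t : Fin d → ℝ) (h' : Fin k → Fin d → ℝ),
        (∏ α ∈ Finset.univ.erase (vzero (k+1)), F α (x + dotB α (Fin.cons t h'))) =
        F (Fin.cons true (vzero k)) (x + t) *
          ∏ β ∈ Finset.univ.erase (vzero k),
            (F (Fin.cons false β) (x + dotB β h') *
              F (Fin.cons true β) ((x + dotB β h') + t)) := by
      intro t h'
      rw [prod_cube_succ_erase (fun α => F α (x + dotB α (Fin.cons t h')))]
      congr 1
      · rw [dotB_cons, dotB_vzero, htrue, add_zero]
      · refine Finset.prod_congr rfl fun β _ => ?_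
        rw [dotB_cons, dotB_cons, htrue, hfalse, zero_add,
          show x + (t + dotB β h') = (x + dotB β h') + t by abel]
    set N := fun (β : Fin k → Bool) (t : Fin d → ℝ) =>
      (∫⁻ y, (F (Fin.cons false β) y * F (Fin.cons true β) (y + t)) ^ q) ^ (1/q) with hN_def
    have hNmeas : ∀ β : Fin k → Bool, Measurable (N β) := by
      intro β
      apply Measurable.pow_const
      apply Measurable.lintegral_prod_right' (f := fun z : (Fin d → ℝ) × (Fin d → ℝ) =>
        (F (Fin.cons false β) z.2 * F (Fin.cons true β) (z.2 + z.1)) ^ q)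
      exact (((hF _).comp measurable_snd).mul
        ((hF _).comp (measurable_snd.add measurable_fst))).pow_const q
    have hinner : ∀ t : Fin d → ℝ, (∫⁻ h' : Fin k → Fin d → ℝ,
        ∏ α ∈ Finset.univ.erase (vzero (k+1)), F α (x + dotB α (Fin.cons t h')))
        ≤ F (Fin.cons true (vzero k)) (x + t) * ∏ β ∈ Finset.univ.erase (vzero k), N β t := by
      intro t
      simp only [hsplit t]
      have hm : Measurable fun h' : Fin k → Fin d → ℝ =>
          ∏ β ∈ Finset.univ.erase (vzero k),
            (F (Fin.cons false β) (x + dotB β h') *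
              F (Fin.cons true β) ((x + dotB β h') + t)) := by
        refine Finset.measurable_prod _ fun β _ => Measurable.mul ?_ ?_
        · exact (hF _).comp (measurable_const.add (measurable_dotB β))
        · exact (hF _).comp ((measurable_const.add (measurable_dotB β)).add_const t)
      rw [lintegral_const_mul _ hm]
      refine mul_le_mul_right ?_ _
      exact IH (fun β y => F (Fin.cons false β) y * F (Fin.cons true β) (y + t))
        (fun β => (hF _).mul ((hF _).comp (measurable_add_const t))) x
    have hcard : (((Finset.univ.erase (vzero k)).card : ℕ) : ℝ) = 2^k - 1 := by
      rw [Finset.card_erase_of_mem (Finset.mem_univ _), Finset.card_univ]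
      have hcf : Fintype.card (Fin k → Bool) = 2^k := by
        rw [Fintype.card_fun]
        simp
      rw [hcf, Nat.cast_sub Nat.one_le_two_pow]
      push_cast
      ring
    -- the Hölder weights sum to 1
    have hsum : ∑ β : Fin k → Bool, (if β = vzero k then 1/Q else 1/r) = 1 := by
      rw [← Finset.add_sum_erase _ _ (Finset.mem_univ (vzero k)), if_pos rfl,
        Finset.sum_congr rfl (fun β hβ => if_neg (Finset.ne_of_mem_erase hβ)),
        Finset.sum_const, nsmul_eq_mul, hcard]
      rcases Nat.eq_zero_or_pos k with h0 | h1
      · subst h0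
        rw [hQ_def]
        norm_num [qkR]
      · have hq0 : 0 < q := qk_pos h1
        have h2q : Q < 2*q := qk_lt_two h1
        have h2qQ : (0:ℝ) < 2*q - Q := by linarith
        have hid := qk_identity h1
        rw [← hq_def, ← hQ_def] at hid
        rw [hr_def]
        have hq' : q ≠ 0 := hq0.ne'
        have hQ' : Q ≠ 0 := hQ0.ne'
        have h2qQ' : 2*q - Q ≠ 0 := h2qQ.ne'
        field_simp
        nlinarith [hid]
    have hyoung : ∀ β ∈ Finset.univ.erase (vzero k),
        (∫⁻ t, N β t ^ r) ^ (1/r) ≤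
          (∫⁻ y, F (Fin.cons false β) y ^ Q) ^ (1/Q) *
            (∫⁻ y, F (Fin.cons true β) y ^ Q) ^ (1/Q) := by
      intro β hβ
      have h1 : 1 ≤ k := k_pos_of_ne β (Finset.ne_of_mem_erase hβ)
      have hq1 : 1 ≤ q := qk_one_le h1
      have hq0 : 0 < q := qk_pos h1
      have hqQ : q < Q := qk_lt_succ h1
      have h2q : Q < 2*q := qk_lt_two h1
      have h2qQ : (0:ℝ) < 2*q - Q := by linarith
      have hr0 : (0:ℝ) < r := by
        rw [hr_def]; exact div_pos (mul_pos hq0 hQ0) h2qQ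
      have hQr : Q < r := by
        rw [hr_def, lt_div_iff₀ h2qQ]; nlinarith
      have ha1 : 1 < Q/q := (one_lt_div hq0).mpr hqQ
      have has : Q/q < r/q := by
        rw [div_lt_div_iff₀ hq0 hq0]; nlinarith
      have hrel : 2/(Q/q) = 1 + 1/(r/q) := by
        rw [hr_def]
        have hq' : q ≠ 0 := hq0.ne'
        have hQ' : Q ≠ 0 := hQ0.ne'
        have h2qQ' : 2*q - Q ≠ 0 := h2qQ.ne'
        field_simp
        ring
      have hNr : ∀ t, N β t ^ r =
          (∫⁻ y, (F (Fin.cons false β) y ^ q) * (F (Fin.cons true β) (y+t) ^ q)) ^ (r/q) := by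
        intro t
        simp only [hN_def]
        rw [← ENNReal.rpow_mul, show (1/q)*r = r/q by ring]
        congr 1
        exact lintegral_congr fun y => ENNReal.mul_rpow_of_nonneg _ _ hq0.le
      have hY := young ((hF (Fin.cons false β)).pow_const q) ((hF (Fin.cons true β)).pow_const q)
        ha1 has hrel
      have hUQ : (∫⁻ y, (F (Fin.cons false β) y ^ q) ^ (Q/q)) =
          ∫⁻ y, F (Fin.cons false β) y ^ Q :=
        lintegral_congr fun y => by
          rw [← ENNReal.rpow_mul, show q*(Q/q) = Q by field_simp]
      have hVQ : (∫⁻ y, (F (Fin.cons true β) y ^ q) ^ (Q/q)) =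
          ∫⁻ y, F (Fin.cons true β) y ^ Q :=
        lintegral_congr fun y => by
          rw [← ENNReal.rpow_mul, show q*(Q/q) = Q by field_simp]
      rw [hUQ, hVQ] at hY
      calc (∫⁻ t, N β t ^ r) ^ (1/r)
          = (∫⁻ t, (∫⁻ y, (F (Fin.cons false β) y ^ q) *
              (F (Fin.cons true β) (y+t) ^ q)) ^ (r/q)) ^ (1/r) := by
            rw [lintegral_congr hNr]
        _ ≤ ((∫⁻ y, F (Fin.cons false β) y ^ Q) ^ ((r/q)/(Q/q)) *
              (∫⁻ y, F (Fin.cons true β) y ^ Q) ^ ((r/q)/(Q/q))) ^ (1/r) :=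
            ENNReal.rpow_le_rpow hY (by positivity)
        _ = (∫⁻ y, F (Fin.cons false β) y ^ Q) ^ (1/Q) *
              (∫⁻ y, F (Fin.cons true β) y ^ Q) ^ (1/Q) := by
            have hexp : ((r/q)/(Q/q))*(1/r) = 1/Q := by
              have hq' : q ≠ 0 := hq0.ne'
              have hQ' : Q ≠ 0 := hQ0.ne'
              have hr' : r ≠ 0 := hr0.ne'
              field_simp
            rw [ENNReal.mul_rpow_of_nonneg _ _ (by positivity : (0:ℝ) ≤ 1/r),
              ← ENNReal.rpow_mul, ← ENNReal.rpow_mul, hexp]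
    -- Hölder in t
    have hH := ENNReal.lintegral_prod_norm_pow_le (μ := (volume : Measure (Fin d → ℝ)))
      Finset.univ
      (f := fun β : Fin k → Bool => if β = vzero k then
        (fun t => F (Fin.cons true (vzero k)) (x + t) ^ Q) else (fun t => N β t ^ r))
      (p := fun β : Fin k → Bool => if β = vzero k then 1/Q else 1/r) ?_ hsum ?_
    · -- main chain
      have hpoint : ∀ t : Fin d → ℝ,
          F (Fin.cons true (vzero k)) (x + t) * ∏ β ∈ Finset.univ.erase (vzero k), N β t
          = ∏ β : Fin k → Bool, (if β = vzero k then
              (fun t => F (Fin.cons true (vzero k)) (x + t) ^ Q)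
              else (fun t => N β t ^ r)) t ^ (if β = vzero k then 1/Q else 1/r) := by
        intro t
        rw [← Finset.mul_prod_erase Finset.univ _ (Finset.mem_univ (vzero k))]
        congr 1
        · rw [if_pos rfl, if_pos rfl]
          beta_reduce
          rw [← ENNReal.rpow_mul, mul_one_div_cancel hQ0.ne', ENNReal.rpow_one]
        · refine Finset.prod_congr rfl fun β hβ => ?_
          have hβ' := Finset.ne_of_mem_erase hβ
          have h1 : 1 ≤ k := k_pos_of_ne β hβ'
          have hq0 : 0 < q := qk_pos h1
          have h2q : Q < 2*q := qk_lt_two h1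
          have hr0 : (0:ℝ) < r := by
            rw [hr_def]; exact div_pos (mul_pos hq0 hQ0) (by linarith)
          rw [if_neg hβ', if_neg hβ']
          beta_reduce
          rw [← ENNReal.rpow_mul, mul_one_div_cancel hr0.ne', ENNReal.rpow_one]
      have hRHS : (∏ β : Fin k → Bool, (∫⁻ t, (if β = vzero k then
            (fun t => F (Fin.cons true (vzero k)) (x + t) ^ Q)
            else (fun t => N β t ^ r)) t) ^ (if β = vzero k then 1/Q else 1/r))
          = (∫⁻ t, F (Fin.cons true (vzero k)) (x + t) ^ Q) ^ (1/Q) *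
            ∏ β ∈ Finset.univ.erase (vzero k), (∫⁻ t, N β t ^ r) ^ (1/r) := by
        rw [← Finset.mul_prod_erase Finset.univ _ (Finset.mem_univ (vzero k))]
        congr 1
        · congr 1
          · exact lintegral_congr fun t => by rw [if_pos rfl]
          · rw [if_pos rfl]
        · refine Finset.prod_congr rfl fun β hβ => ?_
          congr 1
          · exact lintegral_congr fun t => by rw [if_neg (Finset.ne_of_mem_erase hβ)]
          · rw [if_neg (Finset.ne_of_mem_erase hβ)]
      calc ∫⁻ t, ∫⁻ h' : Fin k → Fin d → ℝ,
            ∏ α ∈ Finset.univ.erase (vzero (k+1)), F α (x + dotB α (Fin.cons t h'))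
          ≤ ∫⁻ t, F (Fin.cons true (vzero k)) (x + t) *
              ∏ β ∈ Finset.univ.erase (vzero k), N β t := lintegral_mono hinner
        _ = ∫⁻ t, ∏ β : Fin k → Bool, (if β = vzero k then
              (fun t => F (Fin.cons true (vzero k)) (x + t) ^ Q)
              else (fun t => N β t ^ r)) t ^ (if β = vzero k then 1/Q else 1/r) :=
            lintegral_congr hpoint
        _ ≤ ∏ β : Fin k → Bool, (∫⁻ t, (if β = vzero k then
              (fun t => F (Fin.cons true (vzero k)) (x + t) ^ Q)
              else (fun t => N β t ^ r)) t) ^ (if β = vzero k then 1/Q else 1/r) := hH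
        _ = (∫⁻ t, F (Fin.cons true (vzero k)) (x + t) ^ Q) ^ (1/Q) *
            ∏ β ∈ Finset.univ.erase (vzero k), (∫⁻ t, N β t ^ r) ^ (1/r) := hRHS
        _ ≤ (∫⁻ t, F (Fin.cons true (vzero k)) (x + t) ^ Q) ^ (1/Q) *
            ∏ β ∈ Finset.univ.erase (vzero k),
              ((∫⁻ y, F (Fin.cons false β) y ^ Q) ^ (1/Q) *
                (∫⁻ y, F (Fin.cons true β) y ^ Q) ^ (1/Q)) :=
            mul_le_mul_right (Finset.prod_le_prod' hyoung) _
        _ = ∏ α ∈ Finset.univ.erase (vzero (k+1)), (∫⁻ y, F α y ^ Q) ^ (1/Q) := by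
            rw [show (∫⁻ t, F (Fin.cons true (vzero k)) (x+t) ^ Q)
                = ∫⁻ y, F (Fin.cons true (vzero k)) y ^ Q from
              lintegral_add_left_eq_self (fun y => F (Fin.cons true (vzero k)) y ^ Q) x]
            exact (prod_cube_succ_erase fun α => (∫⁻ y, F α y ^ Q) ^ (1/Q)).symm
    · -- measurability for Hölder
      intro β _
      by_cases hβ : β = vzero k
      · simp only [if_pos hβ]
        exact (((hF _).comp (measurable_const.add measurable_id)).pow_const Q).aemeasurable
      · simp only [if_neg hβ]
        exact ((hNmeas β).pow_const r).aemeasurable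
    · -- nonnegativity of weights
      intro β _
      by_cases hβ : β = vzero k
      · simp only [if_pos hβ]
        positivity
      · simp only [if_neg hβ]
        have h1 : 1 ≤ k := k_pos_of_ne β hβ
        have hq0 : 0 < q := qk_pos h1
        have h2q : Q < 2*q := qk_lt_two h1
        have hr0 : (0:ℝ) < r := by
          rw [hr_def]; exact div_pos (mul_pos hq0 hQ0) (by linarith)
        positivity

end GHKaux

/-- pointwise bound for the cubic convolution product by `L^{q_k}` norms. -/
theorem stmt1 (k d : ℕ) (hk : 2 ≤ k) :
    ∃ C : ℝ, 0 < C ∧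
      ∀ f : (Fin k → Bool) → (Fin d → ℝ) → ℝ,
        (∀ α, Measurable (f α)) → (∀ α x, 0 ≤ f α x) →
        (∀ α, MemLp (f α) (ENNReal.ofReal (qkR k)) volume) →
        ∀ x : Fin d → ℝ,
          cubeD k d f x ≤
            C * ∏ α ∈ Finset.univ.filter (fun α : Fin k → Bool => α ≠ vzero k),
              lpN d (ENNReal.ofReal (qkR k)) (f α) := by
  refine ⟨1, one_pos, ?_⟩
  intro f hmeas hnn hmem x
  have hk1 : 1 ≤ k := by omega
  have hq1 : (1:ℝ) ≤ qkR k := GHKaux.qk_one_le hk1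
  have hq0 : (0:ℝ) < qkR k := lt_of_lt_of_le one_pos hq1
  set p : ℝ≥0∞ := ENNReal.ofReal (qkR k) with hp_def
  have hp0 : p ≠ 0 := by
    simp [hp_def, ENNReal.ofReal_eq_zero, not_le, hq0]
  have hptop : p ≠ ⊤ := ENNReal.ofReal_ne_top
  have hptoReal : p.toReal = qkR k := ENNReal.toReal_ofReal hq0.le
  rw [Finset.filter_ne']
  rw [one_mul]
  -- the key ENNReal-level bound
  have hcore := GHKaux.core k (fun α y => ENNReal.ofReal (f α y))
    (fun α => ENNReal.measurable_ofReal.comp (hmeas α)) x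
  -- identify the right-hand side with eLpNorms
  have hnorm : ∀ α : Fin k → Bool,
      (∫⁻ y, ENNReal.ofReal (f α y) ^ qkR k) ^ (1 / qkR k) = eLpNorm (f α) p volume := by
    intro α
    rw [eLpNorm_eq_lintegral_rpow_enorm_toReal hp0 hptop, hptoReal]
    congr 1
    refine lintegral_congr fun y => ?_
    congr 1
    rw [← Real.enorm_eq_ofReal (hnn α y)]
  have hfin : (∏ α ∈ Finset.univ.erase (vzero k), eLpNorm (f α) p volume) ≠ ⊤ := by
    refine (ENNReal.prod_lt_top ?_).ne
    intro α _
    exact (hmem α).2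
  by_cases hint : Integrable (fun h : Fin k → Fin d → ℝ =>
      ∏ α ∈ Finset.univ.erase (vzero k), f α (x + dotB α h)) volume
  · have hcube : cubeD k d f x = (∫⁻ h : Fin k → Fin d → ℝ,
        ENNReal.ofReal (∏ α ∈ Finset.univ.erase (vzero k), f α (x + dotB α h))).toReal := by
      rw [cubeD, Finset.filter_ne']
      exact integral_eq_lintegral_of_nonneg_ae
        (Filter.Eventually.of_forall fun h =>
          Finset.prod_nonneg fun α _ => hnn α _) hint.aestronglyMeasurable
    rw [hcube]
    have hofReal : ∀ h : Fin k → Fin d → ℝ,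
        ENNReal.ofReal (∏ α ∈ Finset.univ.erase (vzero k), f α (x + dotB α h))
          = ∏ α ∈ Finset.univ.erase (vzero k), ENNReal.ofReal (f α (x + dotB α h)) := by
      intro h
      exact ENNReal.ofReal_prod_of_nonneg fun α _ => hnn α _
    calc (∫⁻ h : Fin k → Fin d → ℝ,
        ENNReal.ofReal (∏ α ∈ Finset.univ.erase (vzero k), f α (x + dotB α h))).toReal
        = (∫⁻ h : Fin k → Fin d → ℝ,
            ∏ α ∈ Finset.univ.erase (vzero k),
              ENNReal.ofReal (f α (x + dotB α h))).toReal := by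
          rw [lintegral_congr hofReal]
      _ ≤ (∏ α ∈ Finset.univ.erase (vzero k), eLpNorm (f α) p volume).toReal := by
          refine ENNReal.toReal_mono hfin ?_
          refine le_trans hcore ?_
          refine le_of_eq (Finset.prod_congr rfl fun α _ => ?_)
          exact hnorm α
      _ = ∏ α ∈ Finset.univ.erase (vzero k), lpN d p (f α) := by
          rw [ENNReal.toReal_prod]
          rfl
  · rw [cubeD, Finset.filter_ne', integral_undef hint]
    exact Finset.prod_nonneg fun α _ => ENNReal.toReal_nonneg
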